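/- Transvections between adjacent indices suffice on a line: the matrices E(i, i+1) and E(i+1, i) for 0 ≤ i < n−1 generate GL(n, GF(2)); i.e., every invertible Boolean matrix can be synthesized by a CNOT circuit whose gates act only on nearest-neighbor qubit pairs of a 1-D path. -/

import Mathlib

/-- Elementary transvection over GF(2): identity plus a 1 in position `(j, i)`. -/
def transvection2 (n : ℕ) (i j : Fin n) : Matrix (Fin n) (Fin n) (ZMod 2) :=
  1 + Matrix.single j i 1

/-- The set of matrices generated by adjacent transvections. -/
def GenAdj (n : ℕ) (M : Matrix (Fin n) (Fin n) (ZMod 2)) : Prop :=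
  ∃ L : List (Fin n × Fin n),
    (∀ p ∈ L, (p.1 : ℕ) + 1 = (p.2 : ℕ) ∨ (p.2 : ℕ) + 1 = (p.1 : ℕ)) ∧
    (L.map fun p => transvection2 n p.1 p.2).prod = M

lemma genAdj_one (n : ℕ) : GenAdj n 1 := ⟨[], by simp, by simp⟩

lemma genAdj_mul {n : ℕ} {A B : Matrix (Fin n) (Fin n) (ZMod 2)}
    (hA : GenAdj n A) (hB : GenAdj n B) : GenAdj n (A * B) := by
  obtain ⟨L1, h1, e1⟩ := hA
  obtain ⟨L2, h2, e2⟩ := hB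
  refine ⟨L1 ++ L2, ?_, ?_⟩
  · intro p hp
    rcases List.mem_append.1 hp with h | h
    · exact h1 p h
    · exact h2 p h
  · rw [List.map_append, List.prod_append, e1, e2]

lemma tri {n : ℕ} (i j k : Fin n) (hij : i ≠ j) (hjk : j ≠ k) (hik : i ≠ k) :
    transvection2 n i j * transvection2 n j k * (transvection2 n i j * transvection2 n j k)
      = transvection2 n i k := by
  set a := Matrix.single j i (1 : ZMod 2) with ha
  set b := Matrix.single k j (1 : ZMod 2) with hb
  have hab : a * b = 0 := Matrix.single_mul_single_of_ne (c := 1) j i k hik 1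
  have haa : a * a = 0 := Matrix.single_mul_single_of_ne (c := 1) j i j hij 1
  have hbb : b * b = 0 := Matrix.single_mul_single_of_ne (c := 1) k j k hjk 1
  have hba : b * a = Matrix.single k i 1 := by
    rw [ha, hb, Matrix.single_mul_single_same, one_mul]
  have hself : ∀ X : Matrix (Fin n) (Fin n) (ZMod 2), X + X = 0 := by
    intro X; ext r s
    simp only [Matrix.add_apply, Matrix.zero_apply]
    exact CharTwo.add_self_eq_zero _
  have step : (1 + a) * (1 + b) = 1 + a + b := by
    rw [add_mul, one_mul, mul_add, mul_one, hab]; abel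
  show (1 + a) * (1 + b) * ((1 + a) * (1 + b)) = 1 + Matrix.single k i 1
  rw [step, ← hba]
  have expand2 : (1 + a + b) * (1 + a + b)
      = 1 + b * a + (a + a) + (b + b) + (a * a + (a * b + b * b)) := by noncomm_ring
  rw [expand2, haa, hab, hbb, hself a, hself b]
  abel

lemma genAdj_transvection {n : ℕ} : ∀ d (i j : Fin n), Nat.dist i.val j.val = d → i ≠ j →
    GenAdj n (transvection2 n i j) := by
  intro d
  induction d using Nat.strong_induction_on with
  | _ d IH =>
    intro i j hd hij
    have hne : (i : ℕ) ≠ (j : ℕ) := fun h => hij (Fin.ext h)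
    have hd1 : 1 ≤ d := by
      rcases Nat.eq_zero_or_pos d with h | h
      · exact absurd (Nat.eq_of_dist_eq_zero (hd.trans h)) hne
      · exact h
    rcases eq_or_lt_of_le hd1 with h1 | h2
    · -- adjacent case: dist = 1
      have : (i : ℕ) + 1 = j ∨ (j : ℕ) + 1 = i := by
        rcases Nat.lt_or_ge i.val j.val with h | h
        · left
          have := hd ▸ (Nat.dist_eq_sub_of_le h.le)
          omega
        · right
          have := hd ▸ (Nat.dist_eq_sub_of_le_right h)
          omega
      exact ⟨[(i, j)], by simpa using this, by simp⟩
    · -- dist ≥ 2: insert intermediate point adjacent to j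
      rcases Nat.lt_or_ge i.val j.val with h | h
      · have hdist : j.val - i.val = d := by
          have := hd ▸ (Nat.dist_eq_sub_of_le h.le); omega
        set k : Fin n := ⟨j.val - 1, lt_trans (by omega) j.isLt⟩ with hk
        have hik : i ≠ k := by
          intro e; apply absurd (congrArg Fin.val e); simp [hk]; omega
        have hkj : k ≠ j := by
          intro e; apply absurd (congrArg Fin.val e); simp [hk]; omega
        have hdik : Nat.dist i.val k.val = d - 1 := by
          rw [Nat.dist_eq_sub_of_le (by simp [hk]; omega)]; simp [hk]; omega
        have hIK := IH (d - 1) (by omega) i k hdik hik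
        have hKJ : GenAdj n (transvection2 n k j) :=
          ⟨[(k, j)], by simp [hk]; omega, by simp⟩
        have := genAdj_mul (genAdj_mul hIK hKJ) (genAdj_mul hIK hKJ)
        rwa [tri i k j hik hkj hij] at this
      · have hdist : i.val - j.val = d := by
          have := hd ▸ (Nat.dist_eq_sub_of_le_right h); omega
        set k : Fin n := ⟨j.val + 1, by omega⟩ with hk
        have hik : i ≠ k := by
          intro e; apply absurd (congrArg Fin.val e); simp [hk]; omega
        have hkj : k ≠ j := by
          intro e; apply absurd (congrArg Fin.val e); simp [hk]
        have hdik : Nat.dist i.val k.val = d - 1 := by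
          rw [Nat.dist_eq_sub_of_le_right (by simp [hk]; omega)]; simp [hk]; omega
        have hIK := IH (d - 1) (by omega) i k hdik hik
        have hKJ : GenAdj n (transvection2 n k j) :=
          ⟨[(k, j)], by simp [hk], by simp⟩
        have := genAdj_mul (genAdj_mul hIK hKJ) (genAdj_mul hIK hKJ)
        rwa [tri i k j hik hkj hij] at this

/-- Nearest-neighbor transvections on a 1-D line generate GL(n, GF(2)). -/
theorem adjacent_transvections_generate {n : ℕ} (hn : 1 ≤ n)
    (M : Matrix (Fin n) (Fin n) (ZMod 2)) (hM : IsUnit M) :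
    ∃ L : List (Fin n × Fin n),
      (∀ p ∈ L, (p.1 : ℕ) + 1 = (p.2 : ℕ) ∨ (p.2 : ℕ) + 1 = (p.1 : ℕ)) ∧
      (L.map fun p => transvection2 n p.1 p.2).prod = M := by
  have hdet : M.det ≠ 0 := ((Matrix.isUnit_iff_isUnit_det M).1 hM).ne_zero
  refine Matrix.diagonal_transvection_induction_of_det_ne_zero (GenAdj n) M hdet ?_ ?_ ?_
  · intro D hD
    have hD1 : D = fun _ => 1 := by
      funext x
      have hx : D x ≠ 0 := by
        intro h0
        apply hD
        rw [Matrix.det_diagonal]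
        exact Finset.prod_eq_zero (Finset.mem_univ x) h0
      rcases (by decide : ∀ c : ZMod 2, c = 0 ∨ c = 1) (D x) with h | h
      · exact absurd h hx
      · exact h
    rw [hD1, Matrix.diagonal_one]
    exact genAdj_one n
  · intro t
    rcases (by decide : ∀ c : ZMod 2, c = 0 ∨ c = 1) t.c with hc | hc
    · have : t.toMatrix = 1 := by
        rw [Matrix.TransvectionStruct.toMatrix]; simp [hc, Matrix.transvection]
      rw [this]; exact genAdj_one n
    · have : t.toMatrix = transvection2 n t.j t.i := by
        rw [Matrix.TransvectionStruct.toMatrix]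
        simp [hc, Matrix.transvection, transvection2]
      rw [this]
      exact genAdj_transvection _ t.j t.i rfl (Ne.symm t.hij)
  · intro A B _ _ hA hB
    exact genAdj_mul hA hB
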